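/- Let A be an m×m integer matrix with det A = 1 or det A = -1, let B be an l×l integer matrix with det B = 1 or det B = -1, and suppose 1 ≤ m < l. If P is an m×l integer matrix and k is an integer with Pᵀ A P = k·B, then k = 0. (This is the algebraic content of the statement: if M and N are closed connected oriented 2n-manifolds with 1 ≤ rank H̄ⁿ(M;ℤ) < rank H̄ⁿ(N;ℤ), then there is no non-zero degree map from M to N.) -/
import Mathlib


open Matrix

theorem no_nonzero_degree_of_rank_lt {m l : ℕ} (hm : 1 ≤ m) (hml : m < l)
    (A : Matrix (Fin m) (Fin m) ℤ) (hA : A.det = 1 ∨ A.det = -1)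
    (B : Matrix (Fin l) (Fin l) ℤ) (hB : B.det = 1 ∨ B.det = -1)
    (P : Matrix (Fin m) (Fin l) ℤ) (k : ℤ)
    (h : Pᵀ * A * P = k • B) : k = 0 := by
  by_contra hk
  -- work over ℚ
  let f : ℤ →+* ℚ := Int.castRingHom ℚ
  have hmap : (Pᵀ.map f) * (A.map f) * (P.map f) = ((k : ℚ)) • (B.map f) := by
    have := congrArg (Matrix.map · f) h
    simp only [Matrix.map_mul] at this
    rw [this]
    ext i j
    simp only [Matrix.map_apply, Matrix.smul_apply, smul_eq_mul, f, Int.coe_castRingHom]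
    push_cast
    ring
  have hdetB : (B.map f).det ≠ 0 := by
    have : (B.map f).det = f B.det := (RingHom.map_det f B).symm
    rw [this]
    rcases hB with hB | hB <;> simp [hB, f]
  have hdet : ((k : ℚ) • (B.map f)).det ≠ 0 := by
    rw [Matrix.det_smul]
    exact mul_ne_zero (pow_ne_zero _ (by exact_mod_cast hk)) hdetB
  have hunit : IsUnit ((k : ℚ) • (B.map f)).det := isUnit_iff_ne_zero.mpr hdet
  have hrank : ((k : ℚ) • (B.map f)).rank = l := by
    rw [Matrix.rank_of_isUnit _ ((Matrix.isUnit_iff_isUnit_det _).mpr hunit)]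
    simp
  have hle : ((k : ℚ) • (B.map f)).rank ≤ m := by
    rw [← hmap, Matrix.mul_assoc]
    calc (Pᵀ.map f * (A.map f * P.map f)).rank ≤ (A.map f * P.map f).rank :=
          Matrix.rank_mul_le_right _ _
      _ ≤ Fintype.card (Fin m) := by
          exact le_trans (Matrix.rank_mul_le_left _ _) (Matrix.rank_le_card_width _)
      _ = m := Fintype.card_fin m
  omega
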